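/- The set function f defined by f(X) = (|X|/(n³+2n)) · min{(|Z|²+2)·γ(Z) : X ⊆ Z ⊆ V} is superadditive, for any set function γ on a finite set V with γ(∅) = 0 and |V| = n ≥ 1. -/

import Mathlib

/-- The set function `f(X) = (|X|/(n³+2n)) · min{(|Z|²+2)·γ(Z) : X ⊆ Z ⊆ V}` used in the
approximation of EDS set functions by GMC instances. -/
def fApprox {V : Type*} [Fintype V] [DecidableEq V]
    (γ : Finset V → WithTop NNRat) (X : Finset V) : WithTop NNRat :=
  ((((X.card : NNRat) / ((Fintype.card V : NNRat) ^ 3 + 2 * (Fintype.card V : NNRat)) :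
      NNRat)) : WithTop NNRat) *
    ((Finset.univ.filter fun Z : Finset V => X ⊆ Z).inf fun Z =>
      ((Z.card ^ 2 + 2 : ℕ) : WithTop NNRat) * γ Z)

/-- The set function `f(X) = (|X|/(n³+2n))·min{(|Z|²+2)·γ(Z) : X ⊆ Z ⊆ V}` is
superadditive, for any set function `γ` with `γ(∅) = 0` on a finite set `V` with
`n = |V| ≥ 1`. -/
theorem stmt14 {V : Type*} [Fintype V] [DecidableEq V]
    (γ : Finset V → WithTop NNRat) (h0 : γ ∅ = 0)
    (hn : 1 ≤ Fintype.card V) :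
    fApprox γ (∅ : Finset V) = 0 ∧
    ∀ X Y : Finset V, Disjoint X Y → fApprox γ X + fApprox γ Y ≤ fApprox γ (X ∪ Y) := by
  constructor
  · simp [fApprox]
  · intro X Y hXY
    set m := (Finset.univ.filter fun Z : Finset V => X ∪ Y ⊆ Z).inf fun Z =>
      ((Z.card ^ 2 + 2 : ℕ) : WithTop NNRat) * γ Z with hm
    have hsubX : (Finset.univ.filter fun Z : Finset V => X ∪ Y ⊆ Z) ⊆
        (Finset.univ.filter fun Z : Finset V => X ⊆ Z) := by
      intro Z hZ
      simp only [Finset.mem_filter, Finset.mem_univ, true_and] at hZ ⊢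
      exact Finset.union_subset_left hZ
    have hsubY : (Finset.univ.filter fun Z : Finset V => X ∪ Y ⊆ Z) ⊆
        (Finset.univ.filter fun Z : Finset V => Y ⊆ Z) := by
      intro Z hZ
      simp only [Finset.mem_filter, Finset.mem_univ, true_and] at hZ ⊢
      exact Finset.union_subset_right hZ
    have hiX : ((Finset.univ.filter fun Z : Finset V => X ⊆ Z).inf fun Z =>
        ((Z.card ^ 2 + 2 : ℕ) : WithTop NNRat) * γ Z) ≤ m := Finset.inf_mono hsubX
    have hiY : ((Finset.univ.filter fun Z : Finset V => Y ⊆ Z).inf fun Z =>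
        ((Z.card ^ 2 + 2 : ℕ) : WithTop NNRat) * γ Z) ≤ m := Finset.inf_mono hsubY
    set D : NNRat := (Fintype.card V : NNRat) ^ 3 + 2 * (Fintype.card V : NNRat) with hD
    calc fApprox γ X + fApprox γ Y
        ≤ (((X.card : NNRat) / D : NNRat) : WithTop NNRat) * m
            + (((Y.card : NNRat) / D : NNRat) : WithTop NNRat) * m := by
          exact add_le_add (mul_le_mul_right hiX _) (mul_le_mul_right hiY _)
      _ = fApprox γ (X ∪ Y) := by
          rw [fApprox, ← add_mul, ← WithTop.coe_add, ← add_div,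
            ← Nat.cast_add, Finset.card_union_of_disjoint hXY]
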